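/- For every point z in the hyperbolic upper half-plane ℍ, the (hyperbolic) distance from z to the imaginary-axis geodesic I = {w ∈ ℍ : Re w = 0} equals arcosh(|z| / Im z), where |z| is the complex absolute value of z. (This is the angle-of-parallelism computation underlying Lemma 4 and Lemma 18 of the paper.) -/

import Mathlib

open scoped UpperHalfPlane

/-- The inverse hyperbolic cosine. -/
noncomputable def arcosh (x : ℝ) : ℝ := Real.log (x + Real.sqrt (x ^ 2 - 1))

lemma arcosh_nonneg {x : ℝ} (hx : 1 ≤ x) : 0 ≤ arcosh x := by
  have : (1:ℝ) ≤ x + Real.sqrt (x ^ 2 - 1) :=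
    le_add_of_le_of_nonneg hx (Real.sqrt_nonneg _)
  exact Real.log_nonneg this

lemma cosh_arcosh {x : ℝ} (hx : 1 ≤ x) : Real.cosh (arcosh x) = x := by
  have h1 : (0:ℝ) ≤ x ^ 2 - 1 := by nlinarith
  have hs : Real.sqrt (x ^ 2 - 1) ^ 2 = x ^ 2 - 1 := Real.sq_sqrt h1
  have hpos : (0:ℝ) < x + Real.sqrt (x ^ 2 - 1) := by
    have := Real.sqrt_nonneg (x ^ 2 - 1); linarith
  rw [arcosh, Real.cosh_eq, Real.exp_log hpos, Real.exp_neg, Real.exp_log hpos]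
  field_simp
  nlinarith [Real.sqrt_nonneg (x ^ 2 - 1)]

/-- The distance in the hyperbolic upper half-plane from a point `z` to the
imaginary-axis geodesic `{w : Re w = 0}` equals `arcosh (|z| / Im z)`. -/
theorem dist_to_imaginary_axis (z : ℍ) :
    Metric.infDist z {w : ℍ | w.re = 0} = arcosh (‖(z : ℂ)‖ / z.im) := by
  set a : ℝ := ‖(z : ℂ)‖ with ha
  have him : 0 < z.im := z.im_pos
  have habs : z.im ≤ a := by
    have := Complex.abs_im_le_norm (z : ℂ)
    rw [UpperHalfPlane.coe_im] at this
    calc z.im ≤ |z.im| := le_abs_self _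
      _ ≤ a := by rwa [← UpperHalfPlane.coe_im]
  have ha_pos : 0 < a := lt_of_lt_of_le him habs
  have hc1 : (1:ℝ) ≤ a / z.im := (one_le_div him).2 habs
  have hsq : z.re ^ 2 + z.im ^ 2 = a ^ 2 := by
    rw [ha, Complex.sq_norm, Complex.normSq_apply, UpperHalfPlane.coe_re,
      UpperHalfPlane.coe_im]; ring
  -- the closest point
  set w0 : ℍ := ⟨⟨0, a⟩, ha_pos⟩ with hw0
  have hw0re : w0.re = 0 := rfl
  have hw0im : w0.im = a := rfl
  have hne : ({w : ℍ | w.re = 0} : Set ℍ).Nonempty := ⟨w0, hw0re⟩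
  -- cosh of distance to any point on the axis
  have key : ∀ w : ℍ, w.re = 0 →
      Real.cosh (dist z w) = (a ^ 2 + w.im ^ 2) / (2 * z.im * w.im) := by
    intro w hw
    have himw : 0 < w.im := w.im_pos
    rw [UpperHalfPlane.cosh_dist, Complex.dist_eq, Complex.sq_norm,
      Complex.normSq_apply]
    simp only [Complex.sub_re, Complex.sub_im, UpperHalfPlane.coe_re,
      UpperHalfPlane.coe_im, hw, sub_zero]
    field_simp
    nlinarith [hsq]
  have hcosh0 : Real.cosh (dist z w0) = a / z.im := by
    rw [key w0 hw0re, hw0im]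
    field_simp
    ring
  have harc := cosh_arcosh hc1
  apply le_antisymm
  · -- infDist ≤ dist z w0 = arcosh (a / z.im)
    have h1 : Metric.infDist (z : ℍ) {w : ℍ | w.re = 0} ≤ dist z w0 :=
      Metric.infDist_le_dist_of_mem hw0re
    have h2 : dist z w0 = arcosh (a / z.im) := by
      have : Real.cosh (dist z w0) = Real.cosh (arcosh (a / z.im)) := by
        rw [hcosh0, harc]
      have h3 := Real.cosh_le_cosh.1 this.le
      have h4 := Real.cosh_le_cosh.1 this.ge
      rw [abs_of_nonneg dist_nonneg, abs_of_nonneg (arcosh_nonneg hc1)] at h3 h4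
      linarith
    linarith
  · haveI := hne.to_subtype
    rw [Metric.infDist_eq_iInf]
    refine le_ciInf fun w' => ?_
    obtain ⟨w, hw⟩ := w'
    simp only [Set.mem_setOf_eq] at hw
    have himw : 0 < w.im := w.im_pos
    have hge : a / z.im ≤ Real.cosh (dist z w) := by
      rw [key w hw, div_le_div_iff₀ him (by positivity)]
      nlinarith [sq_nonneg (w.im - a)]
    have : Real.cosh (arcosh (a / z.im)) ≤ Real.cosh (dist z w) := by
      rw [harc]; exact hge
    have h3 := Real.cosh_le_cosh.1 this
    rwa [abs_of_nonneg dist_nonneg, abs_of_nonneg (arcosh_nonneg hc1)] at h3
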